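/- Deviation bound for Kinf of the prior-shifted empirical distribution at the true mean: Let m ≥ 1, b > 0, and let f : {0,…,m} → [0,b] satisfy f(0) = 0 and f(m) = b. Let X_1,…,X_n be i.i.d. samples from p ∈ Δ_m with pf < b, let α⁰ ∈ ℝ_{≥0}^{m+1} with n₀ = Σ_{j=0}^m α⁰_j, and define the shifted empirical distribution p̄_n(j) = (α⁰_j + ν_j)/(n + n₀) where ν_j = #{i ≤ n : X_i = j}. Then for every u ≥ 0: P( (n + n₀)·Kinf(p̄_n, pf, f) ≥ n·u + n₀·log( b/(b − pf) ) ) ≤ e·(2n + 1)·e^{−n u}. -/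

import Mathlib

set_option maxHeartbeats 1000000

open Real Set

noncomputable section

/-- Kullback–Leibler divergence between finitely supported `p, q` (for `p ≪ q`). -/
def klReal {m : ℕ} (p q : Fin (m + 1) → ℝ) : ℝ :=
  ∑ i, if p i = 0 then 0 else p i * Real.log (p i / q i)

/-- `Kinf(p, μ, f) = inf { KL(p,q) : q ∈ Δ_m, qf ≥ μ }`. -/
def Kinf {m : ℕ} (p : Fin (m + 1) → ℝ) (μ : ℝ) (f : Fin (m + 1) → ℝ) : ℝ :=
  sInf {x | ∃ q ∈ stdSimplex ℝ (Fin (m + 1)),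
    (∀ i, q i = 0 → p i = 0) ∧ μ ≤ ∑ i, f i * q i ∧ x = klReal p q}

open MeasureTheory ProbabilityTheory
open scoped ENNReal

lemma klReal_ge_neg_one {m : ℕ} (w q : Fin (m + 1) → ℝ)
    (hw : ∀ j, 0 ≤ w j) (hq : q ∈ stdSimplex ℝ (Fin (m + 1))) : -1 ≤ klReal w q := by
  have h1 : ∀ j, -(q j) ≤ (if w j = 0 then 0 else w j * Real.log (w j / q j)) := by
    intro j
    by_cases hwj : w j = 0
    · simpa [hwj] using hq.1 j
    · have hwpos : 0 < w j := lt_of_le_of_ne (hw j) (Ne.symm hwj)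
      simp only [hwj, if_false]
      rcases eq_or_lt_of_le (hq.1 j) with hqj | hqj
      · simp [← hqj]
      · have hlog : Real.log (q j / w j) ≤ q j / w j - 1 :=
          Real.log_le_sub_one_of_pos (by positivity)
        have : 1 - q j / w j ≤ Real.log (w j / q j) := by
          rw [Real.log_div hwj (ne_of_gt hqj), Real.log_div (ne_of_gt hqj) hwj] at *
          linarith
        have := mul_le_mul_of_nonneg_left this (hw j)
        have hc : w j * (1 - q j / w j) = w j - q j := by field_simp
        nlinarith
  calc -1 = ∑ j, -(q j) := by rw [Finset.sum_neg_distrib, hq.2]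
    _ ≤ _ := Finset.sum_le_sum fun j _ => h1 j

lemma Kinf_le {m : ℕ} (w q f : Fin (m + 1) → ℝ) (μ : ℝ)
    (hw : ∀ j, 0 ≤ w j)
    (hq : q ∈ stdSimplex ℝ (Fin (m + 1))) (habs : ∀ i, q i = 0 → w i = 0)
    (hqf : μ ≤ ∑ i, f i * q i) : Kinf w μ f ≤ klReal w q := by
  apply csInf_le
  · exact ⟨-1, fun x hx => by
      obtain ⟨q', hq', -, -, rfl⟩ := hx
      exact klReal_ge_neg_one w q' hw hq'⟩
  · exact ⟨q, hq, habs, hqf, rfl⟩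

lemma klReal_eq_sum {m : ℕ} (w q r : Fin (m + 1) → ℝ)
    (h : ∀ j, w j ≠ 0 → w j / q j = r j) :
    klReal w q = ∑ j, w j * Real.log (r j) := by
  apply Finset.sum_congr rfl
  intro j _
  by_cases hwj : w j = 0
  · simp [hwj]
  · rw [if_neg hwj, h j hwj]

lemma step_up (N : ℝ) (hN : 0 < N) (c lam lam' : ℝ) (hc : c ≤ 1) (h0 : 0 ≤ lam)
    (hge : lam ≤ lam') (hle2 : lam' ≤ 1/2) (hgap : lam' ≤ lam + 1/(2*N)) :
    1 - lam*c ≤ (1 + 1/N)*(1 - lam'*c) := by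
  set a := 1/(2*N) with ha_def
  have ha : 0 < a := by positivity
  have h1N : 1/N = 2*a := by rw [ha_def]; field_simp
  rw [h1N]
  have hlam'0 : 0 ≤ lam' := le_trans h0 hge
  rcases le_or_gt c 0 with hci | hci
  · nlinarith [mul_nonneg (sub_nonneg.2 hge) (neg_nonneg.2 hci),
      mul_nonneg (mul_nonneg ha.le hlam'0) (neg_nonneg.2 hci)]
  · have v1 : (lam' - lam)*c ≤ a*c :=
      mul_le_mul_of_nonneg_right (by linarith) hci.le
    have v2 : a*c ≤ a := by nlinarith
    have v3 : lam'*c ≤ 1/2 :=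
      le_trans (by nlinarith : lam'*c ≤ lam') hle2
    have v4 : a*(lam'*c) ≤ a*(1/2) := mul_le_mul_of_nonneg_left v3 ha.le
    nlinarith

lemma step_down (N : ℝ) (hN : 0 < N) (c lam lam' : ℝ) (hc : c ≤ 1) (hlam1 : lam < 1)
    (hge2 : 1/2 ≤ lam') (hle : lam' ≤ lam) (hgap : lam ≤ lam' + 1/(2*N)) :
    1 - lam*c ≤ (1 + 1/N)*(1 - lam'*c) := by
  set a := 1/(2*N) with ha_def
  have ha : 0 < a := by positivity
  have h1N : 1/N = 2*a := by rw [ha_def]; field_simp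
  rw [h1N]
  have hlam'0 : (0:ℝ) ≤ lam' := by linarith
  rcases le_or_gt 0 c with hci | hci
  · have w2 : lam'*c ≤ lam' := by nlinarith
    have w1 : 0 ≤ (lam - lam')*c := mul_nonneg (by linarith) hci
    have w3 : 0 ≤ a*(1 - lam'*c) := mul_nonneg ha.le (by nlinarith)
    nlinarith
  · nlinarith [mul_nonneg (by linarith : 0 ≤ a - (lam - lam')) (neg_nonneg.2 hci.le),
      mul_nonneg (mul_nonneg ha.le (by linarith : (0:ℝ) ≤ lam' - 1/2)) (neg_nonneg.2 hci.le)]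

lemma prodstep (n : ℕ) (hn : 1 ≤ n) (c : Fin n → ℝ) (lam lam' : ℝ)
    (hle : ∀ i, 1 - lam * c i ≤ (1 + 1/(n:ℝ)) * (1 - lam' * c i))
    (hpos : ∀ i, 0 ≤ 1 - lam * c i) :
    ∏ i, (1 - lam * c i) ≤ Real.exp 1 * ∏ i, (1 - lam' * c i) := by
  have hnpos : (0:ℝ) < n := by exact_mod_cast hn
  have honen : (0:ℝ) < 1 + 1/(n:ℝ) := by positivity
  have hpos' : ∀ i, 0 ≤ 1 - lam' * c i := by
    intro i
    have h := le_trans (hpos i) (hle i)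
    nlinarith [h, honen]
  have h2 : ∏ i, (1 - lam * c i) ≤ ∏ i, ((1 + 1/(n:ℝ)) * (1 - lam' * c i)) :=
    Finset.prod_le_prod (fun i _ => hpos i) (fun i _ => hle i)
  have h3 : ∏ i, ((1 + 1/(n:ℝ)) * (1 - lam' * c i))
      = (1 + 1/(n:ℝ))^n * ∏ i, (1 - lam' * c i) := by
    rw [Finset.prod_mul_distrib, Finset.prod_const, Finset.card_univ, Fintype.card_fin]
  have h4 : (1 + 1/(n:ℝ))^n ≤ Real.exp 1 := by
    have h5 : 1 + 1/(n:ℝ) ≤ Real.exp (1/(n:ℝ)) := by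
      have := Real.add_one_le_exp (1/(n:ℝ)); linarith
    calc (1 + 1/(n:ℝ))^n ≤ (Real.exp (1/(n:ℝ)))^n :=
          pow_le_pow_left₀ (by positivity) h5 n
      _ = Real.exp 1 := by
          rw [← Real.exp_nat_mul]; congr 1; field_simp
  have h5 : 0 ≤ ∏ i, (1 - lam' * c i) := Finset.prod_nonneg fun i _ => hpos' i
  calc ∏ i, (1 - lam * c i) ≤ (1 + 1/(n:ℝ))^n * ∏ i, (1 - lam' * c i) := by
        rw [← h3]; exact h2
    _ ≤ Real.exp 1 * ∏ i, (1 - lam' * c i) := mul_le_mul_of_nonneg_right h4 h5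

lemma lemmaB (n : ℕ) (hn : 1 ≤ n) (c : Fin n → ℝ) (hc : ∀ i, c i ≤ 1)
    (lam : ℝ) (h0 : 0 ≤ lam) (h1 : lam < 1) :
    ∃ k : ℕ, k < 2*n ∧
      ∏ i, (1 - lam * c i) ≤ Real.exp 1 * ∏ i, (1 - ((k : ℝ)/(2*n)) * c i) := by
  have hnpos : (0:ℝ) < n := by exact_mod_cast hn
  have h2n : (0:ℝ) < 2*n := by positivity
  have hpos : ∀ i, 0 ≤ 1 - lam * c i := by
    intro i
    have : lam * c i ≤ lam := by nlinarith [hc i]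
    linarith
  by_cases hhalf : lam ≤ 1/2
  · have hkn : ⌈2*(n:ℝ)*lam⌉₊ ≤ n := by
      have h' : (⌈2*(n:ℝ)*lam⌉₊ : ℝ) ≤ n := by
        exact_mod_cast Nat.ceil_le.mpr (show 2*(n:ℝ)*lam ≤ ((n:ℕ):ℝ) by push_cast; nlinarith)
      exact_mod_cast h'
    refine ⟨⌈2*(n:ℝ)*lam⌉₊, by omega, ?_⟩
    set k := ⌈2*(n:ℝ)*lam⌉₊ with hk
    set lam' : ℝ := (k:ℝ)/(2*n) with hlam'
    have hge : lam ≤ lam' := by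
      rw [hlam', le_div_iff₀ h2n]
      calc lam * (2*n) = 2*(n:ℝ)*lam := by ring
        _ ≤ k := Nat.le_ceil _
    have hgap : lam' ≤ lam + 1/(2*n) := by
      rw [hlam', div_le_iff₀ h2n]
      have h6 := (Nat.ceil_lt_add_one (by positivity : (0:ℝ) ≤ 2*(n:ℝ)*lam)).le
      calc (k:ℝ) ≤ 2*(n:ℝ)*lam + 1 := h6
        _ = (lam + 1/(2*n)) * (2*n) := by field_simp
    have hle' : lam' ≤ 1/2 := by
      rw [hlam', div_le_iff₀ h2n]
      calc (k:ℝ) ≤ n := by exact_mod_cast hkn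
        _ = 1/2 * (2*n) := by ring
    exact prodstep n hn c lam lam'
      (fun i => step_up n hnpos (c i) lam lam' (hc i) h0 hge hle' hgap) hpos
  · push_neg at hhalf
    have hk2n : ⌊2*(n:ℝ)*lam⌋₊ < 2*n := by
      have h' : (⌊2*(n:ℝ)*lam⌋₊ : ℝ) < 2*n := by
        calc (⌊2*(n:ℝ)*lam⌋₊ : ℝ) ≤ 2*(n:ℝ)*lam := Nat.floor_le (by positivity)
          _ < 2*n := by nlinarith
      exact_mod_cast h'
    refine ⟨⌊2*(n:ℝ)*lam⌋₊, hk2n, ?_⟩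
    set k := ⌊2*(n:ℝ)*lam⌋₊ with hk
    set lam' : ℝ := (k:ℝ)/(2*n) with hlam'
    have hle' : lam' ≤ lam := by
      rw [hlam', div_le_iff₀ h2n]
      calc (k:ℝ) ≤ 2*(n:ℝ)*lam := Nat.floor_le (by positivity)
        _ = lam * (2*n) := by ring
    have hgap : lam ≤ lam' + 1/(2*n) := by
      have h6 := (Nat.lt_floor_add_one (2*(n:ℝ)*lam)).le
      have h7 : lam' + 1/(2*(n:ℝ)) = ((k:ℝ)+1)/(2*n) := by rw [hlam']; ring
      rw [h7, le_div_iff₀ h2n]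
      nlinarith [h6]
    have hge' : 1/2 ≤ lam' := by
      rw [hlam', le_div_iff₀ h2n]
      have h7 : (n:ℝ) ≤ k := by
        have : n ≤ k := Nat.le_floor (show ((n:ℕ):ℝ) ≤ 2*(n:ℝ)*lam by push_cast; nlinarith)
        exact_mod_cast this
      calc 1/2 * (2*(n:ℝ)) = n := by ring
        _ ≤ k := h7
    have hgap' : lam ≤ lam' + 1/(2*(n:ℝ)) := hgap
    exact prodstep n hn c lam lam'
      (fun i => step_down n hnpos (c i) lam lam' (hc i) h1 hge' hle' hgap') hpos

lemma lemmaC {n m : ℕ} {Ω : Type*} [MeasurableSpace Ω] (P : Measure Ω)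
    [IsProbabilityMeasure P]
    (X : Fin n → Ω → Fin (m + 1)) (hXmeas : ∀ i, Measurable (X i))
    (hindep : iIndepFun X P)
    (h : Fin (m + 1) → ℝ≥0∞) :
    ∫⁻ ω, ∏ i, h (X i ω) ∂P = ∏ i, ∑ j, P (X i ⁻¹' {j}) * h j := by
  have key : (fun ω => ∏ i, h (X i ω))
      = fun ω => ∑ v : Fin n → Fin (m + 1),
          Set.indicator (⋂ i, X i ⁻¹' {v i}) (fun _ => ∏ i, h (v i)) ω := by
    funext ω
    rw [Finset.sum_eq_single (fun i => X i ω)]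
    · have hmem : ω ∈ ⋂ i, X i ⁻¹' {X i ω} := by simp
      rw [Set.indicator_of_mem hmem]
    · intro v _ hv
      have hnmem : ω ∉ ⋂ i, X i ⁻¹' {v i} := by
        simp only [Set.mem_iInter, Set.mem_preimage, Set.mem_singleton_iff]
        intro hall
        exact hv (funext fun i => (hall i).symm)
      rw [Set.indicator_of_notMem hnmem]
    · intro habs
      exact absurd (Finset.mem_univ _) habs
  rw [key]
  have hmeas : ∀ v : Fin n → Fin (m + 1), MeasurableSet (⋂ i, X i ⁻¹' {(v i : Fin (m+1))}) :=
    fun v => MeasurableSet.iInter fun i => (hXmeas i) (measurableSet_singleton _)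
  rw [lintegral_finset_sum]
  swap
  · exact fun v _ => (measurable_const).indicator (hmeas v)
  have hind : ∀ v : Fin n → Fin (m + 1),
      P (⋂ i, X i ⁻¹' {v i}) = ∏ i, P (X i ⁻¹' {v i}) := by
    intro v
    exact hindep.meas_iInter fun i => ⟨{v i}, measurableSet_singleton _, rfl⟩
  calc ∑ v : Fin n → Fin (m+1), ∫⁻ ω, Set.indicator (⋂ i, X i ⁻¹' {v i})
          (fun _ => ∏ i, h (v i)) ω ∂P
      = ∑ v : Fin n → Fin (m+1), (∏ i, h (v i)) * P (⋂ i, X i ⁻¹' {v i}) := by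
        apply Finset.sum_congr rfl
        intro v _
        rw [lintegral_indicator_const (hmeas v)]
    _ = ∑ v : Fin n → Fin (m+1), ∏ i, (P (X i ⁻¹' {v i}) * h (v i)) := by
        apply Finset.sum_congr rfl
        intro v _
        rw [hind v, Finset.prod_mul_distrib]
        ring
    _ = ∏ i, ∑ j, P (X i ⁻¹' {j}) * h j := by
        rw [Finset.prod_univ_sum, Fintype.piFinset_univ]

lemma lemmaA {m : ℕ} (b μ : ℝ) (hb : 0 < b) (hμ0 : 0 ≤ μ) (hμb : μ < b)
    (f : Fin (m+1) → ℝ) (hf : ∀ i, f i ∈ Set.Icc (0:ℝ) b) (hfm : f (Fin.last m) = b)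
    (w : Fin (m+1) → ℝ) (hw : w ∈ stdSimplex ℝ (Fin (m+1)))
    (ε : ℝ) (hε : 0 < ε) :
    ∃ lam : ℝ, 0 ≤ lam ∧ lam < 1 ∧
      Kinf w μ f ≤ (∑ j, w j * Real.log (1 - lam * ((f j - μ)/(b - μ)))) + ε := by
  have hbμ : 0 < b - μ := by linarith
  set d : Fin (m+1) → ℝ := fun j => (f j - μ)/(b - μ) with hd_def
  have hw0 : ∀ j, 0 ≤ w j := hw.1
  have hw1 : ∑ j, w j = 1 := hw.2
  have hd1 : ∀ j, d j ≤ 1 := fun j => by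
    rw [hd_def, div_le_one hbμ]; linarith [(hf j).2]
  have hfd : ∀ j, f j = μ + (b - μ) * d j := fun j => by
    rw [hd_def]; field_simp; ring
  have hden : ∀ lam : ℝ, 0 ≤ lam → lam < 1 → ∀ j, 0 < 1 - lam * d j := by
    intro lam h0 h1 j
    rcases le_or_gt (d j) 0 with h | h
    · nlinarith [mul_nonneg h0 (neg_nonneg.2 h)]
    · nlinarith [mul_le_mul_of_nonneg_left (hd1 j) h0]
  have hrw : ∀ j, (f j - μ)/(b - μ) = d j := fun j => by rw [hd_def]
  clear_value d
  by_cases hwf : μ ≤ ∑ j, f j * w j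
  · refine ⟨0, le_refl 0, one_pos, ?_⟩
    have h1 : Kinf w μ f ≤ klReal w w :=
      Kinf_le w w f μ hw0 hw (fun _ h => h) hwf
    have h2 : klReal w w = ∑ j, w j * Real.log 1 :=
      klReal_eq_sum w w (fun _ => 1) (fun j hj => div_self hj)
    have h3 : (∑ j, w j * Real.log (1 - 0 * d j)) = 0 := by simp
    simp only [hrw]
    rw [h3]
    simp only [Real.log_one, mul_zero, Finset.sum_const_zero] at h2
    linarith
  · push_neg at hwf
    set φ : ℝ → ℝ := fun lam => ∑ j, (w j * d j) / (1 - lam * d j) with hφ_def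
    have hφ0 : φ 0 < 0 := by
      have e1 : φ 0 = ((∑ j, f j * w j) - μ)/(b - μ) := by
        rw [hφ_def]
        simp only [zero_mul, sub_zero, div_one]
        rw [eq_div_iff hbμ.ne']
        have e0 : ∀ j, w j * d j * (b - μ) = f j * w j - μ * w j := fun j => by
          rw [hfd j]; ring
        rw [Finset.sum_mul, Finset.sum_congr rfl (fun j _ => e0 j),
          Finset.sum_sub_distrib, ← Finset.mul_sum, hw1, mul_one]
      rw [e1]
      apply div_neg_of_neg_of_pos _ hbμ
      linarith
    by_cases hex : ∃ lam0 : ℝ, 0 ≤ lam0 ∧ lam0 < 1 ∧ 0 ≤ φ lam0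
    · obtain ⟨lam0, hl0, hl1, hφl0⟩ := hex
      have hcont : ContinuousOn φ (Icc 0 lam0) := by
        apply continuousOn_finset_sum
        intro j _
        apply ContinuousOn.div continuousOn_const (by fun_prop)
        intro lam hlam
        exact (hden lam hlam.1 (lt_of_le_of_lt hlam.2 hl1) j).ne'
      have hIVT := intermediate_value_Icc hl0 hcont
      have h0mem : (0:ℝ) ∈ Icc (φ 0) (φ lam0) := ⟨hφ0.le, hφl0⟩
      obtain ⟨lam, hlam_mem, hφlam⟩ := hIVT h0mem
      have hlam0 : 0 ≤ lam := hlam_mem.1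
      have hlam1 : lam < 1 := lt_of_le_of_lt hlam_mem.2 hl1
      have hdenl : ∀ j, 0 < 1 - lam * d j := hden lam hlam0 hlam1
      set q : Fin (m+1) → ℝ := fun j => w j / (1 - lam * d j) with hq_def
      have hq0 : ∀ j, 0 ≤ q j := fun j => div_nonneg (hw0 j) (hdenl j).le
      have hterm : ∀ j, q j = w j + lam * ((w j * d j) / (1 - lam * d j)) := by
        intro j
        rw [hq_def]
        have := (hdenl j).ne'
        field_simp
        ring
      have hφlam' : ∑ j, (w j * d j) / (1 - lam * d j) = 0 := hφlam
      have hsum : ∑ j, q j = 1 := by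
        rw [Finset.sum_congr rfl (fun j _ => hterm j), Finset.sum_add_distrib,
          ← Finset.mul_sum, hw1, hφlam', mul_zero, add_zero]
      have hqf : ∑ j, f j * q j = μ := by
        have e2 : ∀ j, f j * q j = μ * q j + (b - μ) * ((w j * d j) / (1 - lam * d j)) := by
          intro j
          rw [hq_def, hfd j]
          have := (hdenl j).ne'
          field_simp
        rw [Finset.sum_congr rfl (fun j _ => e2 j), Finset.sum_add_distrib,
          ← Finset.mul_sum, ← Finset.mul_sum, hsum, hφlam', mul_zero, add_zero, mul_one]
      have habs : ∀ i, q i = 0 → w i = 0 := by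
        intro i hqi
        rw [hq_def] at hqi
        rcases div_eq_zero_iff.mp hqi with h | h
        · exact h
        · exact absurd h (hdenl i).ne'
      have hkl : klReal w q = ∑ j, w j * Real.log (1 - lam * d j) := by
        apply klReal_eq_sum
        intro j hwj
        rw [hq_def]
        rw [div_div_eq_mul_div, mul_comm, mul_div_assoc, div_self hwj, mul_one]
      have hKinf : Kinf w μ f ≤ ∑ j, w j * Real.log (1 - lam * d j) := by
        rw [← hkl]
        exact Kinf_le w q f μ hw0 ⟨hq0, hsum⟩ habs hqf.ge
      refine ⟨lam, hlam0, hlam1, ?_⟩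
      simp only [hrw]
      linarith
    · push_neg at hex
      have hneg : ∀ lam : ℝ, 0 ≤ lam → lam < 1 → φ lam < 0 := hex
      -- Step i : on the support of w, d < 1
      have hdlt : ∀ j, w j ≠ 0 → d j < 1 := by
        intro j0 hwj0
        by_contra h
        have hdj0 : d j0 = 1 := le_antisymm (hd1 j0) (not_lt.mp h)
        have hwj0p : 0 < w j0 := (hw0 j0).lt_of_ne (Ne.symm hwj0)
        set D : ℝ := μ / (b - μ) with hD_def
        have hD0 : 0 ≤ D := div_nonneg hμ0 hbμ.le
        have hdD : ∀ j, -D ≤ d j := by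
          intro j
          rw [← hrw j, hD_def]
          have h1 := (div_le_div_iff_of_pos_right hbμ).mpr (by linarith [(hf j).1] : (0:ℝ) - μ ≤ f j - μ)
          calc -(μ/(b-μ)) = (0 - μ)/(b-μ) := by ring
            _ ≤ (f j - μ)/(b-μ) := h1
        have hpden : 0 < D + 1 + w j0 := by linarith
        set lam1 : ℝ := 1 - w j0 / (D + 1 + w j0) with hlam1def
        have hfrac : 0 < w j0 / (D + 1 + w j0) := div_pos hwj0p hpden
        have hfrac1 : w j0 / (D + 1 + w j0) ≤ 1 := (div_le_one hpden).2 (by linarith)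
        have h0l : 0 ≤ lam1 := by rw [hlam1def]; linarith
        have h1l : lam1 < 1 := by rw [hlam1def]; linarith
        have hbound : ∀ j, -(w j * D) ≤ (w j * d j) / (1 - lam1 * d j) := by
          intro j
          rcases le_or_gt 0 (d j) with hdj | hdj
          · have : 0 ≤ (w j * d j) / (1 - lam1 * d j) :=
              div_nonneg (mul_nonneg (hw0 j) hdj) (hden lam1 h0l h1l j).le
            nlinarith [mul_nonneg (hw0 j) hD0]
          · have ht1 : 1 ≤ 1 - lam1 * d j := by nlinarith [mul_nonneg h0l (neg_nonneg.2 hdj.le)]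
            have htp : (0:ℝ) < 1 - lam1 * d j := by linarith
            have ha : w j * d j ≤ 0 := mul_nonpos_of_nonneg_of_nonpos (hw0 j) hdj.le
            have h2 : w j * d j ≤ (w j * d j) / (1 - lam1 * d j) := by
              rw [le_div_iff₀ htp]
              nlinarith
            have h3 : -(w j * D) ≤ w j * d j := by
              have := mul_le_mul_of_nonneg_left (hdD j) (hw0 j)
              nlinarith
            linarith
        have hj0term : (w j0 * d j0) / (1 - lam1 * d j0) = D + 1 + w j0 := by
          rw [hdj0, mul_one, mul_one]
          have e4 : 1 - lam1 = w j0 / (D + 1 + w j0) := by rw [hlam1def]; ring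
          rw [e4, div_div_eq_mul_div, mul_comm, mul_div_assoc, div_self hwj0, mul_one]
        have hsplit : φ lam1 = (w j0 * d j0) / (1 - lam1 * d j0)
            + ∑ j ∈ Finset.univ.erase j0, (w j * d j) / (1 - lam1 * d j) :=
          (Finset.add_sum_erase _ _ (Finset.mem_univ j0)).symm
        have herase : -D ≤ ∑ j ∈ Finset.univ.erase j0, (w j * d j) / (1 - lam1 * d j) := by
          have h4 : ∑ j ∈ Finset.univ.erase j0, -(w j * D)
              ≤ ∑ j ∈ Finset.univ.erase j0, (w j * d j) / (1 - lam1 * d j) :=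
            Finset.sum_le_sum fun j _ => hbound j
          have h5 : ∑ j ∈ Finset.univ.erase j0, w j ≤ 1 := by
            rw [← hw1]
            exact Finset.sum_le_sum_of_subset_of_nonneg (Finset.erase_subset _ _)
              (fun j _ _ => hw0 j)
          have h6 : ∑ j ∈ Finset.univ.erase j0, -(w j * D)
              = -((∑ j ∈ Finset.univ.erase j0, w j) * D) := by
            rw [Finset.sum_mul, Finset.sum_neg_distrib]
          have h7 : (∑ j ∈ Finset.univ.erase j0, w j) * D ≤ 1 * D :=
            mul_le_mul_of_nonneg_right h5 hD0
          rw [h6] at h4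
          linarith
        have : 0 < φ lam1 := by
          rw [hsplit, hj0term]
          linarith
        exact absurd this (not_lt.2 (hneg lam1 h0l h1l).le)
      -- positivity of denominators on [0,1] on the support
      have hposIcc : ∀ j, d j < 1 → ∀ lam ∈ Icc (0:ℝ) 1, 0 < 1 - lam * d j := by
        intro j hdj lam hlam
        rcases le_or_gt (d j) 0 with h | h
        · nlinarith [mul_nonneg hlam.1 (neg_nonneg.2 h)]
        · nlinarith [mul_le_mul_of_nonneg_right hlam.2 h.le]
      -- the filter 𝓝[Ioo 0 1] 1 is nontrivial
      haveI hNB : (nhdsWithin (1:ℝ) (Ioo (0:ℝ) 1)).NeBot := by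
        apply mem_closure_iff_nhdsWithin_neBot.mp
        rw [closure_Ioo (by norm_num : (0:ℝ) ≠ 1)]
        exact ⟨by norm_num, le_refl 1⟩
      -- Step ii : Z 1 ≤ 1
      set Z : ℝ → ℝ := fun lam => ∑ j, w j / (1 - lam * d j) with hZ_def
      have hZid : ∀ lam : ℝ, 0 ≤ lam → lam < 1 →
          (∑ j, w j / (1 - lam * d j)) = 1 + lam * ∑ j, (w j * d j) / (1 - lam * d j) := by
        intro lam h0 h1
        have e : ∀ j, w j / (1 - lam * d j) = w j + lam * ((w j * d j) / (1 - lam * d j)) := by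
          intro j
          have := (hden lam h0 h1 j).ne'
          field_simp
          ring
        rw [Finset.sum_congr rfl (fun j _ => e j), Finset.sum_add_distrib, hw1,
          ← Finset.mul_sum]
      have hZlt : ∀ lam ∈ Ioo (0:ℝ) 1, Z lam ≤ 1 := by
        intro lam hlam
        have hφl : (∑ j, (w j * d j) / (1 - lam * d j)) < 0 := hneg lam hlam.1.le hlam.2
        have hid : Z lam = 1 + lam * ∑ j, (w j * d j) / (1 - lam * d j) :=
          hZid lam hlam.1.le hlam.2
        nlinarith [mul_neg_of_pos_of_neg hlam.1 hφl]
      have hcontZ : ContinuousOn Z (Icc (0:ℝ) 1) := by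
        apply continuousOn_finset_sum
        intro j _
        by_cases hwj : w j = 0
        · have e : (fun lam => w j / (1 - lam * d j)) = fun _ => (0:ℝ) :=
            funext fun lam => by rw [hwj, zero_div]
          rw [e]; exact continuousOn_const
        · exact ContinuousOn.div continuousOn_const (by fun_prop)
            (fun lam hlam => (hposIcc j (hdlt j hwj) lam hlam).ne')
      have htendZ : Filter.Tendsto Z (nhdsWithin 1 (Ioo (0:ℝ) 1)) (nhds (Z 1)) :=
        (hcontZ 1 (by norm_num : (1:ℝ) ∈ Icc (0:ℝ) 1)).mono Ioo_subset_Icc_self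
      have hZ1 : Z 1 ≤ 1 := le_of_tendsto htendZ
        (by filter_upwards [self_mem_nhdsWithin] with lam hlam using hZlt lam hlam)
      have hZ1S : Z 1 = ∑ j, w j / (1 - d j) := by
        rw [hZ_def]; simp only [one_mul]
      have hZle : ∑ j, w j / (1 - d j) ≤ 1 := hZ1S ▸ hZ1
      -- Step iii
      have hdlast : d (Fin.last m) = 1 := by
        rw [← hrw, hfm, div_self hbμ.ne']
      have hwlast : w (Fin.last m) = 0 := by
        by_contra hne
        exact absurd hdlast (ne_of_lt (hdlt _ hne))
      -- the optimal q
      set S : ℝ := ∑ j, w j / (1 - d j) with hS_def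
      set q : Fin (m+1) → ℝ :=
        fun j => (if j = Fin.last m then 1 - S else 0) + w j / (1 - d j) with hq_def
      have hq0 : ∀ j, 0 ≤ q j := by
        intro j
        apply add_nonneg
        · split_ifs with h
          · linarith [hZle]
          · exact le_refl 0
        · exact div_nonneg (hw0 j) (by linarith [hd1 j])
      have hsumq : ∑ j, q j = 1 := by
        rw [hq_def]
        rw [Finset.sum_add_distrib, Finset.sum_ite_eq' Finset.univ (Fin.last m)
          (fun _ => 1 - S)]
        simp only [Finset.mem_univ, if_true]
        rw [← hS_def]
        ring
      have habs : ∀ i, q i = 0 → w i = 0 := by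
        intro i hqi
        by_cases hwi : w i = 0
        · exact hwi
        · exfalso
          have hdi : d i < 1 := hdlt i hwi
          have hite : 0 ≤ (if i = Fin.last m then 1 - S else 0) := by
            split_ifs with h
            · linarith [hZle]
            · exact le_refl 0
          have hdiv : 0 ≤ w i / (1 - d i) := div_nonneg (hw0 i) (by linarith)
          have hdiv0 : w i / (1 - d i) = 0 := by
            have : q i = (if i = Fin.last m then 1 - S else 0) + w i / (1 - d i) := rfl
            rw [this] at hqi
            linarith
          rcases div_eq_zero_iff.mp hdiv0 with h | h
          · exact hwi h
          · linarith
      -- value of the mean under q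
      have e6 : ∀ j, w j / (1 - d j) = w j + (w j * d j) / (1 - d j) := by
        intro j
        by_cases hwj : w j = 0
        · simp [hwj]
        · have h := (hdlt j hwj)
          have h2 : 1 - d j ≠ 0 := by intro hc; rw [sub_eq_zero] at hc; exact h.ne' hc
          field_simp
          ring
      have hSPhi : S = 1 + ∑ j, (w j * d j) / (1 - d j) := by
        rw [hS_def, Finset.sum_congr rfl (fun j _ => e6 j), Finset.sum_add_distrib, hw1]
      have e5 : ∀ j, f j * (w j / (1 - d j))
          = μ * (w j / (1 - d j)) + (b - μ) * ((w j * d j) / (1 - d j)) := by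
        intro j
        by_cases hwj : w j = 0
        · simp [hwj]
        · have h := (hdlt j hwj)
          have h2 : 1 - d j ≠ 0 := by intro hc; rw [sub_eq_zero] at hc; exact h.ne' hc
          rw [hfd j]
          field_simp
      have hqf : ∑ j, f j * q j = μ := by
        have expand : ∀ j, f j * q j
            = (if j = Fin.last m then f j * (1 - S) else 0) + f j * (w j / (1 - d j)) := by
          intro j
          have : q j = (if j = Fin.last m then 1 - S else 0) + w j / (1 - d j) := rfl
          rw [this, mul_add, mul_ite, mul_zero]
        rw [Finset.sum_congr rfl (fun j _ => expand j), Finset.sum_add_distrib,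
          Finset.sum_ite_eq' Finset.univ (Fin.last m) (fun j => f j * (1 - S))]
        simp only [Finset.mem_univ, if_true]
        rw [hfm, Finset.sum_congr rfl (fun j _ => e5 j), Finset.sum_add_distrib,
          ← Finset.mul_sum, ← Finset.mul_sum, ← hS_def]
        have hPhi : (∑ j, (w j * d j) / (1 - d j)) = S - 1 := by linarith [hSPhi]
        rw [hPhi]
        ring
      have hkl : klReal w q = ∑ j, w j * Real.log (1 - d j) := by
        apply klReal_eq_sum
        intro j hwj
        have hjne : j ≠ Fin.last m := by
          intro hc; rw [hc] at hwj; exact hwj hwlast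
        have hqj : q j = w j / (1 - d j) := by
          have : q j = (if j = Fin.last m then 1 - S else 0) + w j / (1 - d j) := rfl
          rw [this, if_neg hjne, zero_add]
        rw [hqj, div_div_eq_mul_div, mul_comm, mul_div_assoc, div_self hwj, mul_one]
      have hKinf : Kinf w μ f ≤ ∑ j, w j * Real.log (1 - d j) := by
        rw [← hkl]
        exact Kinf_le w q f μ hw0 ⟨hq0, hsumq⟩ habs hqf.ge
      -- Step iv : approximate λ = 1 from below
      set G : ℝ → ℝ := fun lam => ∑ j, w j * Real.log (1 - lam * d j) with hG_def
      have hcontG : ContinuousOn G (Icc (0:ℝ) 1) := by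
        apply continuousOn_finset_sum
        intro j _
        by_cases hwj : w j = 0
        · have e : (fun lam => w j * Real.log (1 - lam * d j)) = fun _ => (0:ℝ) :=
            funext fun lam => by rw [hwj, zero_mul]
          rw [e]; exact continuousOn_const
        · exact ContinuousOn.mul continuousOn_const
            (ContinuousOn.log (by fun_prop)
              (fun lam hlam => (hposIcc j (hdlt j hwj) lam hlam).ne'))
      have htendG : Filter.Tendsto G (nhdsWithin 1 (Ioo (0:ℝ) 1)) (nhds (G 1)) :=
        (hcontG 1 (by norm_num : (1:ℝ) ∈ Icc (0:ℝ) 1)).mono Ioo_subset_Icc_self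
      have hG1 : G 1 = ∑ j, w j * Real.log (1 - d j) := by
        rw [hG_def]; simp only [one_mul]
      have hev : ∀ᶠ lam in nhdsWithin 1 (Ioo (0:ℝ) 1), G 1 - ε < G lam :=
        htendG.eventually (eventually_gt_nhds (by linarith))
      obtain ⟨lam, hglam, hlmem⟩ := (hev.and eventually_mem_nhdsWithin).exists
      have hglam' : G 1 - ε < ∑ j, w j * Real.log (1 - lam * d j) := hglam
      refine ⟨lam, hlmem.1.le, hlmem.2, ?_⟩
      simp only [hrw]
      linarith

/-- **Deviation bound for `Kinf` of the prior-shifted empirical distribution at the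
true mean** (Lemma 8). `X_1, …, X_n` are i.i.d. samples from `p ∈ Δ_m`,
`ν_j = #{i : X_i = j}`, and `p̄_n(j) = (α⁰_j + ν_j)/(n + n₀)`. -/
theorem kinf_shifted_empirical_deviation
    (m : ℕ) (hm : 1 ≤ m) (b : ℝ) (hb : 0 < b)
    (f : Fin (m + 1) → ℝ) (hf : ∀ i, f i ∈ Set.Icc (0 : ℝ) b)
    (hf0 : f 0 = 0) (hfm : f (Fin.last m) = b)
    (n : ℕ) (hn : 1 ≤ n)
    {Ω : Type*} [MeasurableSpace Ω] (P : Measure Ω) [IsProbabilityMeasure P]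
    (X : Fin n → Ω → Fin (m + 1)) (hXmeas : ∀ i, Measurable (X i))
    (hindep : iIndepFun X P)
    (p : Fin (m + 1) → ℝ) (hp : p ∈ stdSimplex ℝ (Fin (m + 1)))
    (hpf : ∑ ℓ, f ℓ * p ℓ < b)
    (hdist : ∀ i, Measure.map (X i) P = ∑ j, ENNReal.ofReal (p j) • Measure.dirac j)
    (α0 : Fin (m + 1) → ℝ) (hα0 : ∀ j, 0 ≤ α0 j)
    (n0 : ℝ) (hn0 : n0 = ∑ j, α0 j)
    (u : ℝ) (hu : 0 ≤ u) :
    P {ω | (n : ℝ) * u + n0 * Real.log (b / (b - ∑ ℓ, f ℓ * p ℓ))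
          ≤ ((n : ℝ) + n0) *
            Kinf (fun j => (α0 j + (Finset.univ.filter fun i => X i ω = j).card) / (n + n0))
              (∑ ℓ, f ℓ * p ℓ) f}
      ≤ ENNReal.ofReal (Real.exp 1 * (2 * n + 1) * Real.exp (-(n : ℝ) * u)) := by
  have hnR : (0:ℝ) < n := by exact_mod_cast hn
  set μ : ℝ := ∑ ℓ, f ℓ * p ℓ with hμ_def
  have hμ0 : 0 ≤ μ := Finset.sum_nonneg fun ℓ _ => mul_nonneg (hf ℓ).1 (hp.1 ℓ)
  have hμb : μ < b := hpf
  have hbμ : 0 < b - μ := by linarith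
  set d : Fin (m+1) → ℝ := fun j => (f j - μ)/(b - μ) with hd_def
  have hrw : ∀ j, (f j - μ)/(b - μ) = d j := fun j => by rw [hd_def]
  have hd1 : ∀ j, d j ≤ 1 := fun j => by
    rw [hd_def, div_le_one hbμ]; linarith [(hf j).2]
  have hdD : ∀ j, -(μ/(b-μ)) ≤ d j := by
    intro j
    rw [← hrw j]
    have h1 := (div_le_div_iff_of_pos_right hbμ).mpr
      (by linarith [(hf j).1] : (0:ℝ) - μ ≤ f j - μ)
    calc -(μ/(b-μ)) = (0 - μ)/(b-μ) := by ring
      _ ≤ (f j - μ)/(b-μ) := h1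
  clear_value d
  have hden : ∀ lam : ℝ, 0 ≤ lam → lam < 1 → ∀ j, 0 < 1 - lam * d j := by
    intro lam h0 h1 j
    rcases le_or_gt (d j) 0 with h | h
    · nlinarith [mul_nonneg h0 (neg_nonneg.2 h)]
    · nlinarith [mul_le_mul_of_nonneg_left (hd1 j) h0]
  have hn0nn : 0 ≤ n0 := hn0 ▸ Finset.sum_nonneg fun j _ => hα0 j
  have hN : (0:ℝ) < (n:ℝ) + n0 := by linarith
  set L : ℝ := Real.log (b / (b - μ)) with hL_def
  have hL0 : 0 ≤ L := Real.log_nonneg ((one_le_div hbμ).2 (by linarith))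
  have hlogle : ∀ lam : ℝ, 0 ≤ lam → lam < 1 → ∀ j, Real.log (1 - lam * d j) ≤ L := by
    intro lam h0 h1 j
    have hub : 1 - lam * d j ≤ b/(b-μ) := by
      have h2 : -(lam * d j) ≤ lam * (μ/(b-μ)) := by
        have := mul_le_mul_of_nonneg_left (hdD j) h0
        nlinarith
      have h3 : lam * (μ/(b-μ)) ≤ μ/(b-μ) := by
        have hq : 0 ≤ μ/(b-μ) := div_nonneg hμ0 hbμ.le
        nlinarith
      have h4 : b/(b-μ) = 1 + μ/(b-μ) := by field_simp; ring
      linarith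
    rw [hL_def]
    exact Real.log_le_log (hden lam h0 h1 j) hub
  set ε0 : ℝ := Real.log ((2*(n:ℝ)+1)/(2*(n:ℝ))) with hε0_def
  have hε0 : 0 < ε0 := Real.log_pos ((one_lt_div (by positivity)).2 (by linarith))
  have hpd : ∑ j, p j * d j = 0 := by
    have e0 : ∀ j, p j * d j * (b - μ) = f j * p j - μ * p j := by
      intro j
      rw [← hrw j]
      field_simp
    have h5 : (∑ j, p j * d j) * (b - μ) = 0 := by
      rw [Finset.sum_mul, Finset.sum_congr rfl (fun j _ => e0 j), Finset.sum_sub_distrib,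
        ← Finset.mul_sum, hp.2, mul_one, ← hμ_def, sub_self]
    exact (mul_eq_zero.mp h5).resolve_right hbμ.ne'
  -- the bad events on the grid
  set A : ℕ → Set Ω := fun k =>
    {ω | Real.exp ((n:ℝ)*u - ε0 - 1) ≤ ∏ i, (1 - ((k:ℝ)/(2*(n:ℝ))) * d (X i ω))} with hA_def
  -- inclusion of the event in the union of the grid events
  have hincl : {ω | (n : ℝ) * u + n0 * L
          ≤ ((n : ℝ) + n0) *
            Kinf (fun j => (α0 j + (Finset.univ.filter fun i => X i ω = j).card) / (n + n0))
              μ f}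
      ⊆ ⋃ k ∈ Finset.range (2*n), A k := by
    intro ω hω
    simp only [Set.mem_setOf_eq] at hω
    set w : Fin (m+1) → ℝ :=
      fun j => (α0 j + ((Finset.univ.filter fun i => X i ω = j).card : ℝ)) / (↑n + n0)
      with hw_def
    have hcard : ∑ j, (((Finset.univ.filter fun i => X i ω = j).card : ℕ) : ℝ) = n := by
      have h0 : (Finset.univ : Finset (Fin n)).card
          = ∑ j : Fin (m+1), (Finset.univ.filter fun i => X i ω = j).card :=
        Finset.card_eq_sum_card_fiberwise (fun i _ => Finset.mem_univ _)
      rw [Finset.card_univ, Fintype.card_fin] at h0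
      exact_mod_cast congrArg (Nat.cast : ℕ → ℝ) h0.symm
    have hwsimp : w ∈ stdSimplex ℝ (Fin (m+1)) := by
      constructor
      · intro j
        exact div_nonneg (add_nonneg (hα0 j) (Nat.cast_nonneg _)) hN.le
      · rw [hw_def]
        rw [← Finset.sum_div, Finset.sum_add_distrib, hcard, ← hn0]
        field_simp
        ring
    obtain ⟨lam, hl0, hl1, hKle⟩ := lemmaA b μ hb hμ0 hμb f hf hfm w hwsimp
      (ε0 / ((n:ℝ) + n0)) (by positivity)
    simp only [hrw] at hKle
    -- multiply through by (n + n0)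
    have hKle2 : ((n:ℝ) + n0) * Kinf w μ f
        ≤ (∑ j, (α0 j + ((Finset.univ.filter fun i => X i ω = j).card : ℝ))
            * Real.log (1 - lam * d j)) + ε0 := by
      have e1 : ((n:ℝ) + n0) * ((∑ j, w j * Real.log (1 - lam * d j)) + ε0 / ((n:ℝ) + n0))
          = (∑ j, (α0 j + ((Finset.univ.filter fun i => X i ω = j).card : ℝ))
              * Real.log (1 - lam * d j)) + ε0 := by
        rw [mul_add, Finset.mul_sum]
        congr 1
        · apply Finset.sum_congr rfl
          intro j _
          rw [hw_def]
          field_simp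
        · field_simp
      calc ((n:ℝ) + n0) * Kinf w μ f
          ≤ ((n:ℝ) + n0) * ((∑ j, w j * Real.log (1 - lam * d j)) + ε0 / ((n:ℝ) + n0)) :=
            mul_le_mul_of_nonneg_left hKle hN.le
        _ = _ := e1
    have hαb : ∑ j, α0 j * Real.log (1 - lam * d j) ≤ n0 * L := by
      calc ∑ j, α0 j * Real.log (1 - lam * d j)
          ≤ ∑ j, α0 j * L :=
            Finset.sum_le_sum fun j _ =>
              mul_le_mul_of_nonneg_left (hlogle lam hl0 hl1 j) (hα0 j)
        _ = n0 * L := by rw [← Finset.sum_mul, ← hn0]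
    have hsample : ∑ j, (((Finset.univ.filter fun i => X i ω = j).card : ℝ))
        * Real.log (1 - lam * d j) = ∑ i, Real.log (1 - lam * d (X i ω)) := by
      rw [← Finset.sum_fiberwise' Finset.univ (fun i => X i ω)
        (fun j => Real.log (1 - lam * d j))]
      apply Finset.sum_congr rfl
      intro j _
      rw [Finset.sum_const, nsmul_eq_mul]
    have hsplit : ∑ j, (α0 j + ((Finset.univ.filter fun i => X i ω = j).card : ℝ))
        * Real.log (1 - lam * d j)
        = (∑ j, α0 j * Real.log (1 - lam * d j))
          + ∑ i, Real.log (1 - lam * d (X i ω)) := by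
      rw [← hsample, ← Finset.sum_add_distrib]
      apply Finset.sum_congr rfl
      intro j _
      ring
    have hlogsum : (n:ℝ)*u - ε0 ≤ ∑ i, Real.log (1 - lam * d (X i ω)) := by
      have := hω
      rw [hsplit] at hKle2
      linarith
    have hfacpos : ∀ i, 0 < 1 - lam * d (X i ω) := fun i => hden lam hl0 hl1 _
    have hprod : Real.exp ((n:ℝ)*u - ε0) ≤ ∏ i, (1 - lam * d (X i ω)) := by
      have e2 : ∏ i, (1 - lam * d (X i ω))
          = Real.exp (∑ i, Real.log (1 - lam * d (X i ω))) := by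
        rw [Real.exp_sum]
        exact Finset.prod_congr rfl fun i _ => (Real.exp_log (hfacpos i)).symm
      rw [e2]
      exact Real.exp_le_exp.2 hlogsum
    obtain ⟨k, hk2n, hBB⟩ := lemmaB n hn (fun i => d (X i ω)) (fun i => hd1 _) lam hl0 hl1
    refine Set.mem_biUnion (Finset.mem_range.2 hk2n) ?_
    rw [hA_def]
    simp only [Set.mem_setOf_eq]
    have hE : Real.exp ((n:ℝ)*u - ε0 - 1)
        = Real.exp ((n:ℝ)*u - ε0) / Real.exp 1 := by
      rw [← Real.exp_sub]
    rw [hE, div_le_iff₀ (Real.exp_pos 1)]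
    calc Real.exp ((n:ℝ)*u - ε0) ≤ ∏ i, (1 - lam * d (X i ω)) := hprod
      _ ≤ Real.exp 1 * ∏ i, (1 - ((k:ℝ)/(2*(n:ℝ))) * d (X i ω)) := by
          have := hBB
          push_cast at this ⊢
          linarith
      _ = (∏ i, (1 - ((k:ℝ)/(2*(n:ℝ))) * d (X i ω))) * Real.exp 1 := by ring
  -- probability bound for each grid event
  have hAk : ∀ k ∈ Finset.range (2*n),
      P (A k) ≤ ENNReal.ofReal (Real.exp (1 + ε0 - (n:ℝ)*u)) := by
    intro k hk
    have hk2n : k < 2*n := Finset.mem_range.1 hk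
    set lam' : ℝ := (k:ℝ)/(2*(n:ℝ)) with hlam'_def
    have hl0 : 0 ≤ lam' := by positivity
    have hl1 : lam' < 1 := by
      rw [hlam'_def, div_lt_one (by positivity)]
      exact_mod_cast hk2n
    set g : Fin (m+1) → ℝ := fun j => 1 - lam' * d j with hg_def
    have hg0 : ∀ j, 0 ≤ g j := fun j => (hden lam' hl0 hl1 j).le
    have hgsum : ∑ j, p j * g j = 1 := by
      rw [hg_def]
      have e3 : ∀ j, p j * (1 - lam' * d j) = p j - lam' * (p j * d j) := fun j => by ring
      rw [Finset.sum_congr rfl (fun j _ => e3 j), Finset.sum_sub_distrib, ← Finset.mul_sum,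
        hpd, mul_zero, sub_zero, hp.2]
    have hmeasg : ∀ i : Fin n, Measurable fun ω => ENNReal.ofReal (g (X i ω)) := by
      intro i
      exact (Measurable.of_discrete (f := fun j => ENNReal.ofReal (g j))).comp (hXmeas i)
    have hFmeas : Measurable fun ω => ∏ i, ENNReal.ofReal (g (X i ω)) :=
      Finset.measurable_prod Finset.univ fun i _ => hmeasg i
    have hAset : A k = {ω | ENNReal.ofReal (Real.exp ((n:ℝ)*u - ε0 - 1))
        ≤ ∏ i, ENNReal.ofReal (g (X i ω))} := by
      rw [hA_def]
      ext ω
      simp only [Set.mem_setOf_eq]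
      rw [← ENNReal.ofReal_prod_of_nonneg (fun i _ => hg0 (X i ω))]
      exact (ENNReal.ofReal_le_ofReal_iff
        (Finset.prod_nonneg fun i _ => hg0 (X i ω))).symm
    have hmark := mul_meas_ge_le_lintegral₀ (μ := P) hFmeas.aemeasurable
      (ENNReal.ofReal (Real.exp ((n:ℝ)*u - ε0 - 1)))
    have hXj : ∀ (i : Fin n) (j : Fin (m+1)), P (X i ⁻¹' {j}) = ENNReal.ofReal (p j) := by
      intro i j
      rw [← Measure.map_apply (hXmeas i) (measurableSet_singleton j), hdist i,
        Measure.finset_sum_apply]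
      rw [Finset.sum_eq_single j]
      · simp [Measure.dirac_apply]
      · intro j' _ hj'
        simp [Measure.dirac_apply, hj']
      · intro hj
        exact absurd (Finset.mem_univ j) hj
    have hlint : ∫⁻ ω, ∏ i, ENNReal.ofReal (g (X i ω)) ∂P = 1 := by
      rw [lemmaC P X hXmeas hindep (fun j => ENNReal.ofReal (g j))]
      have e4 : ∀ i : Fin n, ∑ j, P (X i ⁻¹' {j}) * ENNReal.ofReal (g j) = 1 := by
        intro i
        have e5 : ∀ j, P (X i ⁻¹' {j}) * ENNReal.ofReal (g j)
            = ENNReal.ofReal (p j * g j) := by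
          intro j
          rw [hXj i j, ← ENNReal.ofReal_mul (hp.1 j)]
        rw [Finset.sum_congr rfl (fun j _ => e5 j),
          ← ENNReal.ofReal_sum_of_nonneg (fun j _ => mul_nonneg (hp.1 j) (hg0 j)), hgsum,
          ENNReal.ofReal_one]
      rw [Finset.prod_congr rfl (fun i _ => e4 i), Finset.prod_const, one_pow]
    rw [hlint] at hmark
    rw [hAset]
    have hinv := ENNReal.le_inv_iff_mul_le.2 (by rwa [mul_comm] at hmark)
    calc P {ω | ENNReal.ofReal (Real.exp ((n:ℝ)*u - ε0 - 1))
          ≤ ∏ i, ENNReal.ofReal (g (X i ω))}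
        ≤ (ENNReal.ofReal (Real.exp ((n:ℝ)*u - ε0 - 1)))⁻¹ := hinv
      _ = ENNReal.ofReal (Real.exp (1 + ε0 - (n:ℝ)*u)) := by
          rw [← ENNReal.ofReal_inv_of_pos (Real.exp_pos _), ← Real.exp_neg]
          congr 1
          ring_nf
  -- put everything together
  calc P {ω | (n : ℝ) * u + n0 * L
          ≤ ((n : ℝ) + n0) *
            Kinf (fun j => (α0 j + (Finset.univ.filter fun i => X i ω = j).card) / (n + n0))
              μ f}
      ≤ P (⋃ k ∈ Finset.range (2*n), A k) := measure_mono hincl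
    _ ≤ ∑ k ∈ Finset.range (2*n), P (A k) := measure_biUnion_finset_le _ _
    _ ≤ ∑ k ∈ Finset.range (2*n), ENNReal.ofReal (Real.exp (1 + ε0 - (n:ℝ)*u)) :=
        Finset.sum_le_sum hAk
    _ = ENNReal.ofReal (Real.exp 1 * (2 * n + 1) * Real.exp (-(n : ℝ) * u)) := by
        rw [Finset.sum_const, Finset.card_range, nsmul_eq_mul]
        rw [← ENNReal.ofReal_natCast (2*n), ← ENNReal.ofReal_mul (by positivity)]
        congr 1
        have hexp : Real.exp (1 + ε0 - (n:ℝ)*u)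
            = Real.exp 1 * ((2*(n:ℝ)+1)/(2*(n:ℝ))) * Real.exp (-(n:ℝ)*u) := by
          rw [show (1:ℝ) + ε0 - (n:ℝ)*u = 1 + ε0 + (-(n:ℝ)*u) by ring, Real.exp_add,
            Real.exp_add, hε0_def, Real.exp_log (by positivity)]
        rw [hexp]
        push_cast
        field_simp
  done

end
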